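/- Let 𝓗 = {z ∈ R^d : A_H^T z ≤ b_H} be a nonempty polyhedron and let z*_H be the minimal 2-norm optimizer of max{c^T z : z ∈ 𝓗} (assumed to have finite optimal value). Then there exists ε̄ > 0 such that for every ε ∈ [0, ε̄], z*_H is the unique maximizer over 𝓗 of the perturbed objective J_ε(z) = c^T z − (ε/2)‖z‖², i.e., J_ε(z*_H) ≥ J_ε(z) for all z ∈ 𝓗 with equality only at z = z*_H when ε > 0. -/

import Mathlib

open scoped InnerProductSpace
open Finset

variable {E : Type*} [NormedAddCommGroup E] [InnerProductSpace ℝ E]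
variable {ι : Type*} [Fintype ι]

private lemma conic_caratheodory (v : ι → E) (s : Finset ι) :
    ∀ lam : ι → ℝ, (∀ i ∈ s, 0 ≤ lam i) →
    ∃ t ⊆ s, LinearIndependent ℝ (fun i : t => v i) ∧
      ∃ mu : ι → ℝ, (∀ i, 0 ≤ mu i) ∧ ∑ i ∈ t, mu i • v i = ∑ i ∈ s, lam i • v i := by
  classical
  induction s using Finset.strongInduction with
  | _ s ih =>
    intro lam hlam
    by_cases hind : LinearIndependent ℝ (fun i : s => v i)
    · refine ⟨s, Finset.Subset.refl s, hind,
        fun i => if i ∈ s then lam i else 0, fun i => ?_, ?_⟩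
      · by_cases h : i ∈ s
        · simpa [h] using hlam i h
        · simp [h]
      · exact Finset.sum_congr rfl fun i hi => by simp [hi]
    · obtain ⟨g, hg0, i0, hi0⟩ := Fintype.not_linearIndependent_iff.mp hind
      have main : ∀ cc : ι → ℝ, (∑ i ∈ s, cc i • v i = 0) → (∃ i ∈ s, 0 < cc i) →
          ∃ t ⊆ s, LinearIndependent ℝ (fun i : t => v i) ∧
            ∃ mu : ι → ℝ, (∀ i, 0 ≤ mu i) ∧ ∑ i ∈ t, mu i • v i = ∑ i ∈ s, lam i • v i := by
        rintro cc hccsum ⟨ip, hips, hip⟩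
        have hTne : (s.filter (fun i => 0 < cc i)).Nonempty :=
          ⟨ip, Finset.mem_filter.mpr ⟨hips, hip⟩⟩
        obtain ⟨i1, hi1T, hi1min⟩ :=
          Finset.exists_min_image (s.filter (fun i => 0 < cc i)) (fun i => lam i / cc i) hTne
        have hi1s : i1 ∈ s := (Finset.mem_filter.mp hi1T).1
        have hci1 : 0 < cc i1 := (Finset.mem_filter.mp hi1T).2
        set r : ℝ := lam i1 / cc i1 with hr
        have hr0 : 0 ≤ r := div_nonneg (hlam i1 hi1s) hci1.le
        set lam' : ι → ℝ := fun i => lam i - r * cc i with hlam'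
        have hlam'i1 : lam' i1 = 0 := by
          simp only [hlam', hr]
          field_simp
          simp
        have hlam'nn : ∀ i ∈ s.erase i1, 0 ≤ lam' i := by
          intro i hi
          have his : i ∈ s := Finset.mem_of_mem_erase hi
          rcases le_or_gt (cc i) 0 with h | h
          · have h1 : r * cc i ≤ 0 := mul_nonpos_of_nonneg_of_nonpos hr0 h
            have h2 := hlam i his
            simp only [hlam']; linarith
          · have hiT : i ∈ s.filter (fun i => 0 < cc i) := Finset.mem_filter.mpr ⟨his, h⟩
            have h3 : r * cc i ≤ lam i := (le_div_iff₀ h).mp (hi1min i hiT)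
            simp only [hlam']; linarith
        have hsum' : ∑ i ∈ s.erase i1, lam' i • v i = ∑ i ∈ s, lam i • v i := by
          rw [Finset.sum_erase _ (by rw [hlam'i1, zero_smul])]
          have : ∑ i ∈ s, lam' i • v i
              = ∑ i ∈ s, lam i • v i - r • ∑ i ∈ s, cc i • v i := by
            rw [Finset.smul_sum, ← Finset.sum_sub_distrib]
            refine Finset.sum_congr rfl fun i _ => ?_
            rw [smul_smul, ← sub_smul]
          rw [this, hccsum, smul_zero, sub_zero]
        obtain ⟨t, hts, htind, mu, hmu, hmusum⟩ :=
          ih (s.erase i1) (Finset.erase_ssubset hi1s) lam' hlam'nn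
        exact ⟨t, hts.trans (Finset.erase_subset _ _), htind, mu, hmu,
          by rw [hmusum, hsum']⟩
      set cc : ι → ℝ := fun i => if h : i ∈ s then g ⟨i, h⟩ else 0 with hcc
      have hccsum : ∑ i ∈ s, cc i • v i = 0 := by
        rw [← Finset.sum_coe_sort s (fun i => cc i • v i)]
        rw [← hg0]
        exact Finset.sum_congr rfl fun i _ => by simp [hcc]
      have hccne : cc (i0 : ι) ≠ 0 := by simpa [hcc] using hi0
      rcases lt_or_gt_of_ne hccne with hneg | hpos
      · have : ∑ i ∈ s, (-cc) i • v i = 0 := by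
          simp only [Pi.neg_apply, neg_smul, Finset.sum_neg_distrib, hccsum, neg_zero]
        exact main (-cc) this ⟨i0, i0.2, by simpa using hneg⟩
      · exact main cc hccsum ⟨i0, i0.2, hpos⟩

private lemma isClosed_coneFinset [FiniteDimensional ℝ E] (v : ι → E) (t : Finset ι)
    (hind : LinearIndependent ℝ (fun i : t => v i)) :
    IsClosed {x : E | ∃ mu : ι → ℝ, (∀ i, 0 ≤ mu i) ∧ x = ∑ i ∈ t, mu i • v i} := by
  classical
  let φ : (t → ℝ) →ₗ[ℝ] E :=
    { toFun := fun f => ∑ i : t, f i • v i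
      map_add' := fun f g => by simp [add_smul, Finset.sum_add_distrib]
      map_smul' := fun a f => by simp [Finset.smul_sum, mul_smul] }
  have hker : LinearMap.ker φ = ⊥ := by
    rw [LinearMap.ker_eq_bot']
    intro f hf
    funext i
    exact Fintype.linearIndependent_iff.mp hind f hf i
  have hemb := LinearMap.isClosedEmbedding_of_injective (𝕜 := ℝ) hker
  have hset : IsClosed {f : t → ℝ | ∀ i, 0 ≤ f i} := by
    have : {f : t → ℝ | ∀ i, 0 ≤ f i} = ⋂ i, {f | 0 ≤ f i} := by
      ext f; simp [Set.mem_iInter]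
    rw [this]
    exact isClosed_iInter fun i => isClosed_le continuous_const (continuous_apply i)
  have himg : {x : E | ∃ mu : ι → ℝ, (∀ i, 0 ≤ mu i) ∧ x = ∑ i ∈ t, mu i • v i}
      = φ '' {f : t → ℝ | ∀ i, 0 ≤ f i} := by
    ext x
    constructor
    · rintro ⟨mu, hmu, rfl⟩
      refine ⟨fun i => mu i, fun i => hmu i, ?_⟩
      show ∑ i : t, mu i • v i = _
      rw [Finset.sum_coe_sort t (fun i => mu i • v i)]
    · rintro ⟨f, hf, rfl⟩
      refine ⟨fun i => if h : i ∈ t then f ⟨i, h⟩ else 0, fun i => ?_, ?_⟩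
      · by_cases h : i ∈ t
        · simpa [h] using hf ⟨i, h⟩
        · simp [h]
      · show _ = ∑ i ∈ t, (if h : i ∈ t then f ⟨i, h⟩ else 0) • v i
        rw [← Finset.sum_coe_sort t (fun i => (if h : i ∈ t then f ⟨i, h⟩ else 0) • v i)]
        exact Finset.sum_congr rfl fun i _ => by simp
  rw [himg]
  exact hemb.isClosedMap _ hset

private lemma farkas_cone [FiniteDimensional ℝ E] (v : ι → E) (w : E)
    (h : ∀ x : E, (∀ i, ⟪v i, x⟫_ℝ ≤ 0) → ⟪w, x⟫_ℝ ≤ 0) :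
    ∃ lam : ι → ℝ, (∀ i, 0 ≤ lam i) ∧ w = ∑ i, lam i • v i := by
  classical
  set S : Set E := {x | ∃ lam : ι → ℝ, (∀ i, 0 ≤ lam i) ∧ x = ∑ i, lam i • v i} with hSdef
  have hSclosed : IsClosed S := by
    have hS : S = ⋃ (t : {t : Finset ι // LinearIndependent ℝ (fun i : {x // x ∈ t} => v ↑i)}),
        {x : E | ∃ mu : ι → ℝ, (∀ i, 0 ≤ mu i) ∧ x = ∑ i ∈ t.1, mu i • v i} := by
      ext x
      simp only [Set.mem_iUnion, hSdef, Set.mem_setOf_eq]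
      constructor
      · rintro ⟨lam, hlam, rfl⟩
        obtain ⟨t, -, htind, mu, hmu, hmusum⟩ :=
          conic_caratheodory v Finset.univ lam (fun i _ => hlam i)
        exact ⟨⟨t, htind⟩, mu, hmu, hmusum.symm⟩
      · rintro ⟨t, mu, hmu, rfl⟩
        refine ⟨fun i => if i ∈ t.1 then mu i else 0, fun i => ?_, ?_⟩
        · by_cases h : i ∈ t.1 <;> simp [h, hmu i]
        · rw [← Finset.sum_subset (Finset.subset_univ t.1)
            (fun i _ hi => by simp [hi])]
          exact (Finset.sum_congr rfl fun i hi => by simp [hi]).symm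
    rw [hS]
    exact isClosed_iUnion_of_finite fun t => isClosed_coneFinset v t.1 t.2
  let K : ConvexCone ℝ E :=
    { carrier := S
      smul_mem' := by
        rintro a ha x ⟨lam, hlam, rfl⟩
        refine ⟨fun i => a * lam i, fun i => mul_nonneg ha.le (hlam i), ?_⟩
        rw [Finset.smul_sum]
        exact Finset.sum_congr rfl fun i _ => (mul_smul a (lam i) (v i)).symm ▸ rfl
      add_mem' := by
        rintro x ⟨lam, hlam, rfl⟩ y ⟨mu, hmu, rfl⟩
        refine ⟨fun i => lam i + mu i, fun i => add_nonneg (hlam i) (hmu i), ?_⟩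
        rw [← Finset.sum_add_distrib]
        exact Finset.sum_congr rfl fun i _ => (add_smul _ _ _).symm }
  by_contra hw
  have hwS : w ∉ S := fun ⟨lam, h1, h2⟩ => hw ⟨lam, h1, h2⟩
  have hne : (K : Set E).Nonempty := ⟨0, fun _ => 0, fun i => le_rfl, by simp⟩
  obtain ⟨y, hy1, hy2⟩ : ∃ y : E, (∀ x ∈ K, 0 ≤ ⟪x, y⟫_ℝ) ∧ ⟪y, w⟫_ℝ < 0 := by
    obtain ⟨f, u, hfu, huw⟩ := geometric_hahn_banach_closed_point K.convex hSclosed hwS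
    have h0 : (0:E) ∈ K := ⟨fun _ => 0, fun i => le_rfl, by simp⟩
    have hu : 0 < u := by simpa using hfu 0 h0
    have hfx : ∀ x ∈ K, f x ≤ 0 := by
      intro x hx
      by_contra hpos
      push_neg at hpos
      have := hfu _ (K.smul_mem (div_pos hu hpos) hx)
      rw [map_smul, smul_eq_mul, div_mul_cancel₀ _ hpos.ne'] at this
      exact lt_irrefl _ this
    refine ⟨-(InnerProductSpace.toDual ℝ E).symm f, fun x hx => ?_, ?_⟩
    · rw [inner_neg_right, real_inner_comm, InnerProductSpace.toDual_symm_apply]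
      linarith [hfx x hx]
    · rw [inner_neg_left, InnerProductSpace.toDual_symm_apply]
      linarith
  have hv : ∀ i, ⟪v i, -y⟫_ℝ ≤ 0 := by
    intro i
    have hvi : v i ∈ K := by
      refine ⟨fun j => if j = i then 1 else 0, fun j => by positivity, ?_⟩
      simp
    have := hy1 (v i) hvi
    rw [inner_neg_right]
    linarith
  have hwy := h (-y) hv
  rw [inner_neg_right] at hwy
  rw [real_inner_comm] at hy2
  linarith
set_option linter.unusedSectionVars false

section Main

open scoped InnerProductSpace

/-- Quadratic-perturbation (Mangasarian-type) result: the minimal 2-norm optimizer of a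
linear program over a polyhedron is, for all sufficiently small ε ≥ 0, the unique maximizer
of the perturbed objective `J_ε(z) = cᵀz - (ε/2)‖z‖²`. -/
theorem stmt_1 (d m : ℕ) (A : Fin m → EuclideanSpace ℝ (Fin d)) (b : Fin m → ℝ)
    (c : EuclideanSpace ℝ (Fin d))
    (H : Set (EuclideanSpace ℝ (Fin d)))
    (hH : H = {z | ∀ j : Fin m, ⟪A j, z⟫_ℝ ≤ b j})
    (hne : H.Nonempty)
    (Γ : Set (EuclideanSpace ℝ (Fin d)))
    (hΓ : Γ = {z ∈ H | ∀ v ∈ H, ⟪c, v⟫_ℝ ≤ ⟪c, z⟫_ℝ})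
    (zstar : EuclideanSpace ℝ (Fin d))
    (hzΓ : zstar ∈ Γ)
    (hmin : ∀ z ∈ Γ, ‖zstar‖ ≤ ‖z‖)
    (J : ℝ → EuclideanSpace ℝ (Fin d) → ℝ)
    (hJ : J = fun ε z => ⟪c, z⟫_ℝ - ε / 2 * ‖z‖ ^ 2) :
    ∃ εbar > (0:ℝ), ∀ ε ∈ Set.Icc (0:ℝ) εbar,
      (∀ z ∈ H, J ε z ≤ J ε zstar) ∧
      (0 < ε → ∀ z ∈ H, J ε z = J ε zstar → z = zstar) := by
  classical
  have hzH : zstar ∈ H := by rw [hΓ] at hzΓ; exact hzΓ.1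
  have hopt : ∀ v ∈ H, ⟪c, v⟫_ℝ ≤ ⟪c, zstar⟫_ℝ := by rw [hΓ] at hzΓ; exact hzΓ.2
  have hmemH : ∀ z, z ∈ H ↔ ∀ j : Fin m, ⟪A j, z⟫_ℝ ≤ b j := by
    intro z; rw [hH]; exact Iff.rfl
  -- active constraints
  let ac : Type := {j : Fin m // ⟪A j, zstar⟫_ℝ = b j}
  -- slack lemma
  have hslack : ∀ x : EuclideanSpace ℝ (Fin d), (∀ j : ac, ⟪A j.1, x⟫_ℝ ≤ 0) →
      ∃ t > (0:ℝ), ∀ t' : ℝ, 0 < t' → t' ≤ t → (zstar + t' • x) ∈ H := by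
    intro x hx
    have hj : ∀ j : Fin m, ∃ tj > (0:ℝ), ∀ t' : ℝ, 0 < t' → t' ≤ tj →
        ⟪A j, zstar⟫_ℝ + t' * ⟪A j, x⟫_ℝ ≤ b j := by
      intro j
      have hbz : ⟪A j, zstar⟫_ℝ ≤ b j := (hmemH zstar).mp hzH j
      rcases le_or_gt ⟪A j, x⟫_ℝ 0 with hax | hax
      · exact ⟨1, one_pos, fun t' ht'0 _ => by nlinarith⟩
      · have hjin : ⟪A j, zstar⟫_ℝ < b j := by
          rcases lt_or_eq_of_le hbz with h | h
          · exact h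
          · exact absurd (hx ⟨j, h⟩) (not_le.mpr hax)
        refine ⟨(b j - ⟪A j, zstar⟫_ℝ) / ⟪A j, x⟫_ℝ, div_pos (by linarith) hax,
          fun t' ht'0 ht' => ?_⟩
        have := (le_div_iff₀ hax).mp ht'
        linarith
    choose tj htj0 htj using hj
    refine ⟨(insert 1 (Finset.univ.image tj)).min'
      ⟨1, Finset.mem_insert_self _ _⟩, ?_, fun t' ht'0 ht' => ?_⟩
    · have hmem := Finset.min'_mem (insert 1 (Finset.univ.image tj))
        ⟨1, Finset.mem_insert_self _ _⟩
      rcases Finset.mem_insert.mp hmem with h | h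
      · rw [h]; exact one_pos
      · obtain ⟨j, -, hj⟩ := Finset.mem_image.mp h
        rw [← hj]; exact htj0 j
    · rw [hmemH]
      intro j
      have hle : (insert 1 (Finset.univ.image tj)).min'
          ⟨1, Finset.mem_insert_self _ _⟩ ≤ tj j :=
        Finset.min'_le _ _ (Finset.mem_insert_of_mem
          (Finset.mem_image_of_mem tj (Finset.mem_univ j)))
      have := htj j t' ht'0 (ht'.trans hle)
      rwa [inner_add_right, real_inner_smul_right]
  have hstep1 : ∀ x, (∀ j : ac, ⟪A j.1, x⟫_ℝ ≤ 0) → ⟪c, x⟫_ℝ ≤ 0 := by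
    intro x hx
    obtain ⟨t, ht0, hmem⟩ := hslack x hx
    have := hopt _ (hmem t ht0 le_rfl)
    rw [inner_add_right, real_inner_smul_right] at this
    nlinarith
  have hstep2 : ∀ x, (∀ j : ac, ⟪A j.1, x⟫_ℝ ≤ 0) → ⟪-c, x⟫_ℝ ≤ 0 →
      ⟪-zstar, x⟫_ℝ ≤ 0 := by
    intro x hx hcx
    rw [inner_neg_left] at hcx
    rw [inner_neg_left, neg_nonpos]
    have hc0 : ⟪c, x⟫_ℝ = 0 := le_antisymm (hstep1 x hx) (by linarith)
    obtain ⟨t, ht0, hmem⟩ := hslack x hx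
    by_contra hneg
    push_neg at hneg
    have hxne : x ≠ 0 := by
      intro h
      rw [h, inner_zero_right] at hneg
      exact absurd hneg (lt_irrefl 0)
    have hx2 : (0:ℝ) < ‖x‖ ^ 2 := pow_pos (norm_pos_iff.mpr hxne) 2
    set t' : ℝ := min t (-⟪zstar, x⟫_ℝ / ‖x‖ ^ 2) with ht'def
    have ht'0 : 0 < t' := lt_min ht0 (div_pos (by linarith) hx2)
    have hmem' := hmem t' ht'0 (min_le_left _ _)
    have hΓmem : (zstar + t' • x) ∈ Γ := by
      rw [hΓ]
      refine ⟨hmem', fun v hv => ?_⟩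
      rw [inner_add_right, real_inner_smul_right, hc0, mul_zero, add_zero]
      exact hopt v hv
    have hnorm := hmin _ hΓmem
    have hsq : ‖zstar + t' • x‖ ^ 2
        = ‖zstar‖ ^ 2 + 2 * (t' * ⟪zstar, x⟫_ℝ) + t' ^ 2 * ‖x‖ ^ 2 := by
      rw [norm_add_sq_real, real_inner_smul_right, norm_smul, Real.norm_eq_abs,
        mul_pow, sq_abs]
    have h2 : ‖zstar‖ ^ 2 ≤ ‖zstar + t' • x‖ ^ 2 :=
      pow_le_pow_left₀ (norm_nonneg _) hnorm 2
    have ht'le : t' * ‖x‖ ^ 2 ≤ -⟪zstar, x⟫_ℝ := (le_div_iff₀ hx2).mp (min_le_right _ _)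
    nlinarith [mul_le_mul_of_nonneg_left ht'le ht'0.le, mul_pos ht'0 (neg_pos.mpr hneg)]
  -- Farkas
  obtain ⟨lam, hlam0, hlamsum⟩ := farkas_cone
    (Sum.elim (fun j : ac => A j.1) (fun _ : Unit => -c)) (-zstar)
    (by
      intro x hx
      exact hstep2 x (fun j => hx (Sum.inl j)) (hx (Sum.inr ())))
  set L : ℝ := lam (Sum.inr ()) with hL
  have hL0 : 0 ≤ L := hlam0 _
  have hinner : ∀ y : EuclideanSpace ℝ (Fin d),
      ⟪zstar, y⟫_ℝ = L * ⟪c, y⟫_ℝ - ∑ j : ac, lam (Sum.inl j) * ⟪A j.1, y⟫_ℝ := by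
    intro y
    have h1 : ⟪-zstar, y⟫_ℝ
        = ∑ i : ac ⊕ Unit, lam i * ⟪Sum.elim (fun j : ac => A j.1) (fun _ : Unit => -c) i, y⟫_ℝ := by
      rw [hlamsum, sum_inner]
      exact Finset.sum_congr rfl fun i _ => real_inner_smul_left _ _ _
    rw [Fintype.sum_sum_type] at h1
    simp only [Sum.elim_inl, Sum.elim_inr, inner_neg_left, Finset.univ_unique,
      Finset.sum_singleton, mul_neg] at h1
    have h2 : lam (Sum.inr (default : Unit)) = L := rfl
    rw [h2] at h1
    linarith [h1]
  refine ⟨1 / (L + 1), by positivity, fun ε hε => ?_⟩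
  obtain ⟨hε0, hε1⟩ := hε
  have hεL : ε * L ≤ 1 := by
    have h1 : ε * (L + 1) ≤ 1 / (L + 1) * (L + 1) :=
      mul_le_mul_of_nonneg_right hε1 (by linarith)
    rw [one_div_mul_cancel (by linarith : L + 1 ≠ 0)] at h1
    nlinarith
  -- key inequality
  have hD : ∀ z ∈ H, 0 ≤ ⟪c, zstar - z⟫_ℝ - ε * ⟪zstar, zstar - z⟫_ℝ := by
    intro z hz
    have hy := hinner (zstar - z)
    have hcz : 0 ≤ ⟪c, zstar - z⟫_ℝ := by
      rw [inner_sub_right]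
      linarith [hopt z hz]
    have hsum : 0 ≤ ∑ j : ac, lam (Sum.inl j) * ⟪A j.1, zstar - z⟫_ℝ := by
      refine Finset.sum_nonneg fun j _ => mul_nonneg (hlam0 _) ?_
      rw [inner_sub_right, j.2]
      have := (hmemH z).mp hz j.1
      linarith
    nlinarith [mul_nonneg hε0 hsum, mul_nonneg (sub_nonneg.mpr hεL) hcz]
  have hdiff : ∀ z ∈ H, J ε z + ε / 2 * ‖z - zstar‖ ^ 2 ≤ J ε zstar := by
    intro z hz
    have hexp : ‖z‖ ^ 2 = ‖zstar‖ ^ 2 + 2 * ⟪zstar, z - zstar⟫_ℝ + ‖z - zstar‖ ^ 2 := by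
      have hz' : z = zstar + (z - zstar) := by abel
      calc ‖z‖ ^ 2 = ‖zstar + (z - zstar)‖ ^ 2 := by rw [← hz']
        _ = _ := by rw [norm_add_sq_real]
    have hD' := hD z hz
    have hi1 : ⟪zstar, zstar - z⟫_ℝ = -⟪zstar, z - zstar⟫_ℝ := by
      rw [inner_sub_right, inner_sub_right]; ring
    have hi2 : ⟪c, zstar - z⟫_ℝ = ⟪c, zstar⟫_ℝ - ⟪c, z⟫_ℝ := inner_sub_right _ _ _
    rw [hJ]
    simp only
    nlinarith
  refine ⟨fun z hz => ?_, fun hεpos z hz heq => ?_⟩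
  · have := hdiff z hz
    nlinarith [sq_nonneg ‖z - zstar‖, mul_nonneg hε0 (sq_nonneg ‖z - zstar‖)]
  · have h1 := hdiff z hz
    rw [heq] at h1
    have h2 : ε / 2 * ‖z - zstar‖ ^ 2 ≤ 0 := by linarith
    have h3 : ‖z - zstar‖ ^ 2 ≤ 0 := by
      by_contra h
      push_neg at h
      nlinarith
    have h4 : ‖z - zstar‖ = 0 := by
      have := sq_nonneg ‖z - zstar‖
      have : ‖z - zstar‖ ^ 2 = 0 := le_antisymm h3 this
      exact pow_eq_zero_iff (by norm_num) |>.mp this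
    rw [norm_eq_zero, sub_eq_zero] at h4
    exact h4

end Main
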